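/- Let q ≥ 2, p = q − 1, and let a_1,…,a_p, b_1,…,b_q be positive reals. Define c = max_{1≤i≤q} [e_i(b_1,…,b_q) − e_i(a_1,…,a_p)] / e_{i-1}(a_1,…,a_p), with the conventions e_0 = 1 and e_q(a_1,…,a_p) = 0. Then c > 0 and for every natural number n ≥ 1, f_n ≥ 1/(c)_n, where f_n = ∏_{i=1}^p (a_i)_n / ∏_{i=1}^q (b_i)_n and (c)_n is the rising factorial. Consequently, for all x ≥ 0, {p}F{q}(a;b;x) ≥ 0F1(-;c;x) = ∑_{n≥0} x^n/((c)_n n!). -/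

import Mathlib

open Finset Real MeasureTheory

noncomputable def rise (a : ℝ) (n : ℕ) : ℝ := ∏ k ∈ Finset.range n, (a + k)

noncomputable def esym {q : ℕ} (k : ℕ) (a : Fin q → ℝ) : ℝ :=
  ∑ s ∈ Finset.powersetCard k (Finset.univ : Finset (Fin q)), ∏ i ∈ s, a i

lemma esym_zero {q : ℕ} (v : Fin q → ℝ) : esym 0 v = 1 := by
  simp [esym]

lemma esym_pos {q : ℕ} {k : ℕ} (v : Fin q → ℝ) (hv : ∀ i, 0 < v i) (hk : k ≤ q) :
    0 < esym k v := by
  apply Finset.sum_pos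
  · intro s _; exact Finset.prod_pos fun i _ => hv i
  · exact Finset.powersetCard_nonempty.2 (by simpa using hk)

lemma esym_eq_zero {q : ℕ} {k : ℕ} (v : Fin q → ℝ) (hk : q < k) : esym k v = 0 := by
  rw [esym, Finset.powersetCard_eq_empty.2 (by simpa using hk), Finset.sum_empty]

lemma prod_add_esym {q : ℕ} (v : Fin q → ℝ) (x : ℝ) :
    ∏ i, (v i + x) = ∑ k ∈ Finset.range (q + 1), esym k v * x ^ (q - k) := by
  classical
  rw [Finset.prod_add, Finset.powerset_card_disjiUnion]
  erw [Finset.sum_disjiUnion]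
  rw [show (Finset.univ : Finset (Fin q)).card = q from by simp]
  refine Finset.sum_congr rfl fun k hk => ?_
  rw [esym, Finset.sum_mul]
  refine Finset.sum_congr rfl fun s hs => ?_
  rw [Finset.prod_const, Finset.card_sdiff_of_subset (Finset.subset_univ s), Finset.card_univ,
    Fintype.card_fin, (Finset.mem_powersetCard.1 hs).2]

lemma key_ineq {p : ℕ} (a : Fin p → ℝ) (b : Fin (p + 1) → ℝ) (c : ℝ)
    (hcb : ∀ j, j < p + 1 → esym (j + 1) b ≤ esym (j + 1) a + c * esym j a)
    (x : ℝ) (hx : 0 ≤ x) :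
    ∏ j, (b j + x) ≤ (∏ i, (a i + x)) * (c + x) := by
  rw [prod_add_esym, prod_add_esym]
  have hL : ∑ k ∈ Finset.range (p + 1 + 1), esym k b * x ^ (p + 1 - k)
      = x ^ (p + 1) + ∑ j ∈ Finset.range (p + 1), esym (j + 1) b * x ^ (p - j) := by
    rw [Finset.sum_range_succ' (fun k => esym k b * x ^ (p + 1 - k))]
    rw [esym_zero, one_mul, Nat.sub_zero, add_comm]
    congr 1
    refine Finset.sum_congr rfl fun j hj => ?_
    congr 2
    omega
  have h2 : ∑ k ∈ Finset.range (p + 1), esym k a * x ^ (p - k) * x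
      = x ^ (p + 1) + ∑ j ∈ Finset.range (p + 1), esym (j + 1) a * x ^ (p - j) := by
    rw [Finset.sum_range_succ' (fun k => esym k a * x ^ (p - k) * x)]
    rw [Finset.sum_range_succ (fun j => esym (j + 1) a * x ^ (p - j))]
    rw [esym_eq_zero a (Nat.lt_succ_self p), esym_zero]
    have hstep : ∀ j ∈ Finset.range p,
        esym (j + 1) a * x ^ (p - (j + 1)) * x = esym (j + 1) a * x ^ (p - j) := by
      intro j hj
      rw [mul_assoc, ← pow_succ]
      congr 2
      have := Finset.mem_range.1 hj; omega
    rw [Finset.sum_congr rfl hstep, Nat.sub_zero, one_mul, zero_mul, add_zero, ← pow_succ]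
    ring
  have hR : (∑ k ∈ Finset.range (p + 1), esym k a * x ^ (p - k)) * (c + x)
      = x ^ (p + 1) + ∑ j ∈ Finset.range (p + 1), (esym (j + 1) a + c * esym j a) * x ^ (p - j) := by
    rw [mul_add, Finset.sum_mul, Finset.sum_mul, h2]
    simp only [add_mul]
    rw [Finset.sum_add_distrib]
    have : ∑ k ∈ Finset.range (p + 1), esym k a * x ^ (p - k) * c
        = ∑ k ∈ Finset.range (p + 1), c * esym k a * x ^ (p - k) := by
      refine Finset.sum_congr rfl fun k _ => by ring
    rw [this]
    ring
  rw [hL, hR]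
  refine add_le_add_right (Finset.sum_le_sum fun j hj =>
    mul_le_mul_of_nonneg_right (hcb j (Finset.mem_range.1 hj)) (pow_nonneg hx _)) _

lemma rise_pos {a : ℝ} (ha : 0 < a) (n : ℕ) : 0 < rise a n :=
  Finset.prod_pos fun k _ => by positivity

lemma factorial_cast_real (n : ℕ) : (n.factorial : ℝ) = ∏ k ∈ Finset.range n, ((k : ℝ) + 1) := by
  rw [← Finset.prod_range_add_one_eq_factorial, Nat.cast_prod]
  push_cast
  rfl

lemma rise_le {a : ℝ} (ha : 0 < a) (n : ℕ) :
    rise a n ≤ (max a 1) ^ n * n.factorial := by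
  have : (max a 1) ^ n * (n.factorial : ℝ) = ∏ k ∈ Finset.range n, (max a 1 * ((k : ℝ) + 1)) := by
    rw [Finset.prod_mul_distrib, Finset.prod_const, Finset.card_range, factorial_cast_real]
  rw [this, rise]
  apply Finset.prod_le_prod
  · intro k _; positivity
  · intro k _
    have h1 : a ≤ max a 1 := le_max_left _ _
    have h2 : (1 : ℝ) ≤ max a 1 := le_max_right _ _
    have h3 : (0 : ℝ) ≤ k := Nat.cast_nonneg k
    nlinarith

lemma rise_ge {a : ℝ} (ha : 0 < a) (n : ℕ) :
    (min a 1) ^ n * n.factorial ≤ rise a n := by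
  have : (min a 1) ^ n * (n.factorial : ℝ) = ∏ k ∈ Finset.range n, (min a 1 * ((k : ℝ) + 1)) := by
    rw [Finset.prod_mul_distrib, Finset.prod_const, Finset.card_range, factorial_cast_real]
  rw [this, rise]
  apply Finset.prod_le_prod
  · intro k _; positivity
  · intro k _
    have h1 : min a 1 ≤ a := min_le_left _ _
    have h2 : min a 1 ≤ 1 := min_le_right _ _
    have h3 : (0 : ℝ) ≤ k := Nat.cast_nonneg k
    nlinarith

theorem stmt7 (q : ℕ) (hq : 2 ≤ q) (a : Fin (q - 1) → ℝ) (b : Fin q → ℝ)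
    (ha : ∀ i, 0 < a i) (hb : ∀ i, 0 < b i) (c : ℝ)
    (hc : IsGreatest {y : ℝ | ∃ i : ℕ, 1 ≤ i ∧ i ≤ q ∧
      y = (esym i b - esym i a) / esym (i - 1) a} c) :
    0 < c ∧
    (∀ n : ℕ, 1 ≤ n →
      1 / rise c n ≤ (∏ i, rise (a i) n) / (∏ i, rise (b i) n)) ∧
    (∀ x : ℝ, 0 ≤ x →
      (∑' n : ℕ, x ^ n / (rise c n * (Nat.factorial n)))
        ≤ ∑' n : ℕ, (∏ i, rise (a i) n) / (∏ i, rise (b i) n) * x ^ n / (Nat.factorial n)) := by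
  obtain ⟨p, rfl⟩ : ∃ p, q = p + 1 := ⟨q - 1, by omega⟩
  have hp : 1 ≤ p := by omega
  -- reinterpret a as a function on Fin p (definitional)
  have ha' : ∀ i : Fin p, 0 < a i := ha
  -- c > 0
  have hc0 : 0 < c := by
    have hmem : (esym (p + 1) b - esym (p + 1) a) / esym p a ∈
        {y : ℝ | ∃ i : ℕ, 1 ≤ i ∧ i ≤ p + 1 ∧
          y = (esym i b - esym i a) / esym (i - 1) a} := ⟨p + 1, by omega, le_refl _, rfl⟩
    have h1 := hc.2 hmem
    have h2 : esym (p + 1) a = 0 := esym_eq_zero a (by omega)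
    have h3 : 0 < esym (p + 1) b := esym_pos b hb (le_refl _)
    have h4 : 0 < esym p a := esym_pos a ha (by omega)
    have : 0 < (esym (p + 1) b - esym (p + 1) a) / esym p a := by
      rw [h2, sub_zero]; exact div_pos h3 h4
    linarith
  -- coefficient inequalities
  have hcoef : ∀ j, j < p + 1 →
      esym (j + 1) b ≤ esym (j + 1) a + c * esym j a := by
    intro j hj
    have hmem : (esym (j + 1) b - esym (j + 1) a) / esym j a ∈
        {y : ℝ | ∃ i : ℕ, 1 ≤ i ∧ i ≤ p + 1 ∧
          y = (esym i b - esym i a) / esym (i - 1) a} := ⟨j + 1, by omega, by omega, rfl⟩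
    have h1 := hc.2 hmem
    have hpos : 0 < esym j a := esym_pos a ha (by omega)
    rw [div_le_iff₀ hpos] at h1
    linarith
  -- the pointwise product inequality
  have hkey : ∀ x : ℝ, 0 ≤ x →
      ∏ j, (b j + x) ≤ (∏ i : Fin p, (a i + x)) * (c + x) :=
    fun x hx => key_ineq a b c hcoef x hx
  -- products of rising factorials
  have hPa : ∀ n, 0 < ∏ i : Fin p, rise (a i) n :=
    fun n => Finset.prod_pos fun i _ => rise_pos (ha' i) n
  have hPb : ∀ n, 0 < ∏ j, rise (b j) n :=
    fun n => Finset.prod_pos fun j _ => rise_pos (hb j) n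
  have hrise : ∀ n : ℕ, (∏ j, rise (b j) n) ≤ (∏ i : Fin p, rise (a i) n) * rise c n := by
    intro n
    have hb' : ∏ j, rise (b j) n = ∏ k ∈ Finset.range n, ∏ j, (b j + (k : ℝ)) := by
      simp only [rise]; exact Finset.prod_comm
    have ha2 : (∏ i : Fin p, rise (a i) n) * rise c n
        = ∏ k ∈ Finset.range n, ((∏ i : Fin p, (a i + (k : ℝ))) * (c + (k : ℝ))) := by
      simp only [rise]
      rw [Finset.prod_mul_distrib]
      congr 1
      exact Finset.prod_comm
    rw [hb', ha2]
    apply Finset.prod_le_prod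
    · intro k _
      exact Finset.prod_nonneg fun j _ => add_nonneg (hb j).le (Nat.cast_nonneg k)
    · intro k _; exact hkey k (Nat.cast_nonneg k)
  have part2 : ∀ n : ℕ, 1 ≤ n →
      1 / rise c n ≤ (∏ i, rise (a i) n) / (∏ i, rise (b i) n) := by
    intro n _
    rw [div_le_div_iff₀ (rise_pos hc0 n) (hPb n), one_mul]
    exact hrise n
  refine ⟨hc0, part2, ?_⟩
  -- series comparison
  intro x hx
  set f : ℕ → ℝ := fun n => x ^ n / (rise c n * (Nat.factorial n)) with hf
  set g : ℕ → ℝ := fun n => (∏ i, rise (a i) n) / (∏ i, rise (b i) n) * x ^ n / (Nat.factorial n)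
    with hg
  have hfle : ∀ n, f n ≤ g n := by
    intro n
    rcases Nat.eq_zero_or_pos n with rfl | hn
    · simp [hf, hg, rise]
    · have h1 := part2 n hn
      have h2 : (0 : ℝ) ≤ x ^ n / (Nat.factorial n) := by positivity
      have e1 : f n = (1 / rise c n) * (x ^ n / (Nat.factorial n)) := by
        simp only [hf]
        field_simp
      have e2 : g n = ((∏ i, rise (a i) n) / (∏ i, rise (b i) n)) * (x ^ n / (Nat.factorial n)) := by
        simp only [hg]; ring
      rw [e1, e2]
      exact mul_le_mul_of_nonneg_right h1 h2
  have hf0 : ∀ n, 0 ≤ f n := fun n =>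
    div_nonneg (pow_nonneg hx n)
      (mul_nonneg (rise_pos hc0 n).le (Nat.cast_nonneg _))
  have hg0 : ∀ n, 0 ≤ g n := fun n =>
    div_nonneg (mul_nonneg (div_nonneg (hPa n).le (hPb n).le) (pow_nonneg hx n))
      (Nat.cast_nonneg _)
  -- summability of g via bound by D^n / n!
  set A : ℝ := ∏ i : Fin p, max (a i) 1 with hA
  set B : ℝ := ∏ j : Fin (p + 1), min (b j) 1 with hB
  have hApos : 0 < A := Finset.prod_pos fun i _ => lt_max_of_lt_right one_pos
  have hBpos : 0 < B := Finset.prod_pos fun j _ => lt_min (hb j) one_pos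
  set D : ℝ := (A / B) * x with hD
  have hDpos : 0 ≤ D := by positivity
  have hgle : ∀ n, g n ≤ D ^ n / (Nat.factorial n) := by
    intro n
    have hfacpos : (0 : ℝ) < (Nat.factorial n : ℝ) := by
      exact_mod_cast Nat.factorial_pos n
    have hfac1 : (1 : ℝ) ≤ (Nat.factorial n : ℝ) := by
      exact_mod_cast Nat.one_le_iff_ne_zero.2 (Nat.factorial_ne_zero n)
    have hPaA : ∏ i : Fin p, rise (a i) n ≤ A ^ n * (Nat.factorial n : ℝ) ^ p := by
      have : A ^ n * (Nat.factorial n : ℝ) ^ p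
          = ∏ i : Fin p, ((max (a i) 1) ^ n * (Nat.factorial n : ℝ)) := by
        rw [Finset.prod_mul_distrib, ← Finset.prod_pow, Finset.prod_const,
          Finset.card_univ, Fintype.card_fin]
      rw [this]
      exact Finset.prod_le_prod (fun i _ => le_of_lt (rise_pos (ha' i) n))
        (fun i _ => rise_le (ha' i) n)
    have hPbB : B ^ n * (Nat.factorial n : ℝ) ^ (p + 1) ≤ ∏ j, rise (b j) n := by
      have : B ^ n * (Nat.factorial n : ℝ) ^ (p + 1)
          = ∏ j : Fin (p + 1), ((min (b j) 1) ^ n * (Nat.factorial n : ℝ)) := by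
        rw [Finset.prod_mul_distrib, ← Finset.prod_pow, Finset.prod_const,
          Finset.card_univ, Fintype.card_fin]
      rw [this]
      exact Finset.prod_le_prod
        (fun j _ => mul_nonneg (pow_nonneg (le_min (hb j).le zero_le_one) n) (Nat.cast_nonneg _))
        (fun j _ => rise_ge (hb j) n)
    have hratio : (∏ i, rise (a i) n) / (∏ i, rise (b i) n)
        ≤ (A / B) ^ n / (Nat.factorial n : ℝ) := by
      have h1 : (∏ i, rise (a i) n) / (∏ i, rise (b i) n)
          ≤ (A ^ n * (Nat.factorial n : ℝ) ^ p) / (B ^ n * (Nat.factorial n : ℝ) ^ (p + 1)) :=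
        div_le_div₀ (mul_nonneg (pow_nonneg hApos.le n) (by positivity)) hPaA
          (mul_pos (pow_pos hBpos n) (pow_pos hfacpos _)) hPbB
      have h2 : (A ^ n * (Nat.factorial n : ℝ) ^ p) / (B ^ n * (Nat.factorial n : ℝ) ^ (p + 1))
          = (A / B) ^ n / (Nat.factorial n : ℝ) := by
        rw [div_pow, pow_succ]
        field_simp
      rw [h2] at h1
      exact h1
    calc g n = ((∏ i, rise (a i) n) / (∏ i, rise (b i) n)) * (x ^ n / (Nat.factorial n)) := by
          simp only [hg]; ring
      _ ≤ ((A / B) ^ n / (Nat.factorial n : ℝ)) * (x ^ n / (Nat.factorial n)) := by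
          apply mul_le_mul_of_nonneg_right hratio (by positivity)
      _ = D ^ n / ((Nat.factorial n : ℝ) * (Nat.factorial n : ℝ)) := by
          rw [hD, mul_pow]; ring
      _ ≤ D ^ n / (Nat.factorial n : ℝ) := by
          apply div_le_div_of_nonneg_left (by positivity) hfacpos
          nlinarith
  have hDsum : Summable (fun n : ℕ => D ^ n / (Nat.factorial n : ℝ)) :=
    Real.summable_pow_div_factorial D
  have hgsum : Summable g := Summable.of_nonneg_of_le hg0 hgle hDsum
  have hfsum : Summable f := Summable.of_nonneg_of_le hf0 hfle hgsum
  exact Summable.tsum_le_tsum hfle hfsum hgsum
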